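/- Fix t₁ < ⋯ < t_n and identify i ∈ [n] with γ_d(t_i). For any pair of simplices σ, τ ⊆ [n] on γ_d, exactly one of the following four cases occurs: (A) σ and τ do not overlap in ℝ^d (equivalently, they are not (d+2)-interlacing); (B) σ <_{d+1} τ; (C) τ <_{d+1} σ; (D) the liftings σ̂ and τ̂ overlap in ℝ^{d+1} (equivalently, σ and τ are (d+3)-interlacing). -/

import Mathlib

open Finset

/-- The moment curve in `ℝ^d`: `γ_d(s) = (s, s², …, s^d)`. -/
def momentCurve (d : ℕ) (s : ℝ) : Fin d → ℝ := fun i => s ^ (i.1 + 1)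

/-- The convex hull in `ℝ^d` of the points `γ_d(t i)` for `i ∈ σ`. -/
def mcConv (d : ℕ) {n : ℕ} (t : Fin n → ℝ) (σ : Finset (Fin n)) : Set (Fin d → ℝ) :=
  convexHull ℝ ((fun i => momentCurve d (t i)) '' ↑σ)

/-- Two simplices (given by index sets) overlap in `ℝ^d`:
`conv(σ) ∩ conv(τ) ⊋ conv(σ ∩ τ)`. -/
def Overlap (d : ℕ) {n : ℕ} (t : Fin n → ℝ) (σ τ : Finset (Fin n)) : Prop :=
  ¬ (mcConv d t σ ∩ mcConv d t τ ⊆ mcConv d t (σ ∩ τ))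

/-- Projection `ℝ^{d+1} → ℝ^d` forgetting the last coordinate. -/
def projLast (d : ℕ) (x : Fin (d + 1) → ℝ) : Fin d → ℝ := fun i => x i.castSucc

/-- `h_σ ≤ h_τ` on `conv(σ) ∩ conv(τ)`, phrased via the liftings to `γ_{d+1}`:
any point of the lifted `σ`-simplex lying above a point of the lifted `τ`-simplex
(same projection) has smaller or equal last coordinate. -/
def HeightLE (d : ℕ) {n : ℕ} (t : Fin n → ℝ) (σ τ : Finset (Fin n)) : Prop :=
  ∀ q ∈ mcConv (d + 1) t σ, ∀ q' ∈ mcConv (d + 1) t τ,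
    projLast d q = projLast d q' → q (Fin.last d) ≤ q' (Fin.last d)

/-- `σ <_{d+1} τ`: `σ` and `τ` overlap in `ℝ^d` and `h_σ ≤ h_τ` on the common domain. -/
def HeightLT (d : ℕ) {n : ℕ} (t : Fin n → ℝ) (σ τ : Finset (Fin n)) : Prop :=
  Overlap d t σ τ ∧ HeightLE d t σ τ

/-- A triangulation of `conv(A)` without new vertices: a family of `d`-simplices with
vertices in `A`, pairwise non-overlapping, whose convex hulls cover `conv(A)`. -/
def IsTriangulation (d : ℕ) {n : ℕ} (t : Fin n → ℝ) (A : Finset (Fin n))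
    (T : Finset (Finset (Fin n))) : Prop :=
  (∀ σ ∈ T, σ.card = d + 1 ∧ σ ⊆ A) ∧
  (∀ σ ∈ T, ∀ τ ∈ T, σ ≠ τ → ¬ Overlap d t σ τ) ∧
  (∀ p ∈ mcConv d t A, ∃ σ ∈ T, p ∈ mcConv d t σ)

/-- The triangulation `T` uses every vertex of `A`. -/
def UsesAllVertices {n : ℕ} (A : Finset (Fin n)) (T : Finset (Finset (Fin n))) : Prop :=
  ∀ a ∈ A, ∃ σ ∈ T, a ∈ σ

/-- `σ` is a face of the triangulation `T`. -/
def IsFaceOf {n : ℕ} (σ : Finset (Fin n)) (T : Finset (Finset (Fin n))) : Prop :=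
  ∃ ρ ∈ T, σ ⊆ ρ

/-- An alternating sequence `v₁ < ⋯ < v_k` of type (σ): odd-numbered entries
(0-indexed even positions) in `σ`, even-numbered entries in `τ`. -/
def AltSeq {n : ℕ} (σ τ : Finset (Fin n)) (k : ℕ) : Prop :=
  ∃ v : Fin k → Fin n, StrictMono v ∧
    ∀ i : Fin k, (i.1 % 2 = 0 → v i ∈ σ) ∧ (i.1 % 2 = 1 → v i ∈ τ)

/-- `σ` and `τ` are `k`-interlacing. -/
def Interlacing {n : ℕ} (σ τ : Finset (Fin n)) (k : ℕ) : Prop :=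
  AltSeq σ τ k ∨ AltSeq τ σ k

/-- `σ ≤_{d+1} T`: the height of `σ` is at most that of `T` on `conv(σ)`. -/
def SimplexLE (d : ℕ) {n : ℕ} (t : Fin n → ℝ) (σ : Finset (Fin n))
    (T : Finset (Finset (Fin n))) : Prop :=
  ∀ τ ∈ T, HeightLE d t σ τ

/-- `T ≤_{d+1} σ`: the height of `T` is at most that of `σ` on `conv(σ)`. -/
def TriLE (d : ℕ) {n : ℕ} (t : Fin n → ℝ) (T : Finset (Finset (Fin n)))
    (σ : Finset (Fin n)) : Prop :=
  ∀ τ ∈ T, HeightLE d t τ σ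

open Polynomial

section Aux
variable {n : ℕ}



theorem mem_mcConv {d n : ℕ} {t : Fin n → ℝ} {σ : Finset (Fin n)} {x : Fin d → ℝ} :
    x ∈ mcConv d t σ ↔ ∃ a : Fin n → ℝ, (∀ i, 0 ≤ a i) ∧ (∀ i, a i ≠ 0 → i ∈ σ) ∧
      ∑ i, a i = 1 ∧ ∑ i, a i • momentCurve d (t i) = x := by
  constructor
  · rw [mcConv, mem_convexHull_iff_exists_fintype]
    rintro ⟨ι, _, w, z, hw0, hw1, hz, hx⟩
    have hch : ∀ b : ι, ∃ i : Fin n, i ∈ σ ∧ momentCurve d (t i) = z b := by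
      intro b; rcases hz b with ⟨i, hi, hie⟩; exact ⟨i, hi, hie⟩
    choose p hp hpz using hch
    refine ⟨fun i => ∑ b : ι, if p b = i then w b else 0, ?_, ?_, ?_, ?_⟩
    · intro i
      apply Finset.sum_nonneg
      intro b _
      split
      · exact hw0 b
      · exact le_refl 0
    · intro i hi
      by_contra hmem
      apply hi
      apply Finset.sum_eq_zero
      intro b _
      split
      · next h => exact absurd (h ▸ hp b) hmem
      · rfl
    · rw [Finset.sum_comm]
      simpa using hw1
    · rw [← hx]
      calc ∑ i, (∑ b : ι, if p b = i then w b else 0) • momentCurve d (t i)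
          = ∑ i, ∑ b : ι, (if p b = i then w b else 0) • momentCurve d (t i) := by
            simp [Finset.sum_smul]
        _ = ∑ b : ι, ∑ i, (if p b = i then w b else 0) • momentCurve d (t i) :=
            Finset.sum_comm
        _ = ∑ b : ι, w b • z b := by
            apply Finset.sum_congr rfl
            intro b _
            simp [ite_smul, Finset.sum_ite_eq, hpz]
  · rintro ⟨a, ha0, haσ, ha1, hax⟩
    have hzero : ∀ i ∈ Finset.univ, i ∉ σ → a i = 0 := by
      intro i _ hi
      by_contra h
      exact hi (haσ i h)
    have hs1 : ∑ i ∈ σ, a i = 1 := by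
      rw [Finset.sum_subset (Finset.subset_univ σ) hzero, ha1]
    have hsx : ∑ i ∈ σ, a i • momentCurve d (t i) = x := by
      rw [Finset.sum_subset (Finset.subset_univ σ) (fun i h1 h2 => by rw [hzero i h1 h2, zero_smul]), hax]
    have := Finset.centerMass_mem_convexHull σ (w := a) (z := fun i => momentCurve d (t i))
      (fun i _ => ha0 i) (by rw [hs1]; norm_num)
      (fun i hi => Set.mem_image_of_mem (fun j => momentCurve d (t j)) hi)
    rwa [Finset.centerMass_eq_of_sum_1 _ _ hs1, hsx] at this

def AltP {n : ℕ} (c : Fin n → ℝ) (k : ℕ) : Prop :=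
  ∃ v : Fin k → Fin n, StrictMono v ∧
    ∀ i : Fin k, (i.1 % 2 = 0 → 0 < c (v i)) ∧ (i.1 % 2 = 1 → c (v i) < 0)

lemma strictMono_snoc {m : ℕ} {α : Type*} [Preorder α] (v : Fin m → α) (x : α)
    (hv : StrictMono v) (hx : ∀ i, v i < x) : StrictMono (Fin.snoc v x) := by
  intro a b hab
  rcases Fin.eq_castSucc_or_eq_last b with ⟨b', rfl⟩ | rfl
  · rcases Fin.eq_castSucc_or_eq_last a with ⟨a', rfl⟩ | rfl
    · rw [Fin.snoc_castSucc, Fin.snoc_castSucc]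
      exact hv (by exact_mod_cast hab)
    · exact absurd hab (not_lt.mpr (Fin.castSucc_lt_last b').le)
  · rcases Fin.eq_castSucc_or_eq_last a with ⟨a', rfl⟩ | rfl
    · rw [Fin.snoc_castSucc, Fin.snoc_last]
      exact hx a'
    · exact absurd hab (lt_irrefl _)

theorem master {n : ℕ} (t : Fin n → ℝ) (ht : StrictMono t) :
    ∀ N (c : Fin n → ℝ), (Finset.univ.filter (fun i => c i ≠ 0)).card = N →
    ∀ jtop : Fin n, 0 < c jtop → (∀ i, jtop < i → c i = 0) →
    ∃ (r : ℕ) (R : Finset (Fin n)) (v : Fin (r+1) → Fin n),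
      R.card = r ∧ (∀ j ∈ R, c j ≠ 0) ∧ StrictMono v ∧
      (∀ i : Fin (r+1), ((r - i.1) % 2 = 0 → 0 < c (v i)) ∧ ((r - i.1) % 2 = 1 → c (v i) < 0)) ∧
      (∀ i, 0 ≤ c i * ∏ j ∈ R, (t i - t j)) ∧
      (∃ i, 0 < c i * ∏ j ∈ R, (t i - t j)) := by
  intro N
  induction N using Nat.strong_induction_on with
  | _ N IH =>
    intro c hcard jtop hjpos hjtop
    by_cases hA : (Finset.univ.filter (fun i => c i < 0)).Nonempty
    · -- there is a negative entry
      set j1 := (Finset.univ.filter (fun i => c i < 0)).max' hA with hj1def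
      have hj1mem : j1 ∈ Finset.univ.filter (fun i => c i < 0) := Finset.max'_mem _ _
      have hj1neg : c j1 < 0 := by simpa using hj1mem
      have hj1lt : j1 < jtop := by
        rcases lt_trichotomy j1 jtop with h | h | h
        · exact h
        · exact absurd (h ▸ hj1neg) (by linarith)
        · exact absurd (hjtop j1 h ▸ hj1neg) (by norm_num)
      have hposabove : ∀ i, j1 < i → 0 ≤ c i := by
        intro i hi
        by_contra hneg
        push_neg at hneg
        have : i ≤ j1 := Finset.le_max' _ i (by simpa using hneg)
        exact absurd (lt_of_lt_of_le hi this) (lt_irrefl _)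
      have hBne : (Finset.univ.filter (fun i => j1 < i ∧ c i ≠ 0)).Nonempty :=
        ⟨jtop, by simp [hj1lt]; linarith⟩
      set jmid := (Finset.univ.filter (fun i => j1 < i ∧ c i ≠ 0)).min' hBne with hjmiddef
      have hjmidmem : jmid ∈ _ := Finset.min'_mem _ hBne
      have hjmid1 : j1 < jmid := by simpa using (Finset.mem_filter.mp hjmidmem).2.1
      have hjmidne : c jmid ≠ 0 := by simpa using (Finset.mem_filter.mp hjmidmem).2.2
      have hjmidle : ∀ i, c i ≠ 0 → j1 < i → jmid ≤ i := by
        intro i hi hji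
        exact Finset.min'_le _ i (by simp [hji, hi])
      -- truncated flipped function
      set c' : Fin n → ℝ := fun i => if i ≤ j1 then -c i else 0 with hc'def
      have hc'at : ∀ i, i ≤ j1 → c' i = - c i := fun i hi => by simp [hc'def, hi]
      have hc'0 : ∀ i, j1 < i → c' i = 0 := fun i hi => by simp [hc'def, not_le.mpr hi]
      have hsubsub : (Finset.univ.filter (fun i => c' i ≠ 0)) ⊂ (Finset.univ.filter (fun i => c i ≠ 0)) := by
        constructor
        · intro i hi
          simp only [Finset.mem_filter] at hi ⊢
          refine ⟨Finset.mem_univ _, ?_⟩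
          intro h
          apply hi.2
          simp [hc'def, h]
        · intro hsub
          have := hsub (by simp; linarith : jtop ∈ Finset.univ.filter (fun i => c i ≠ 0))
          simp only [Finset.mem_filter] at this
          exact this.2 (hc'0 jtop hj1lt)
      have hcardlt : (Finset.univ.filter (fun i => c' i ≠ 0)).card < N :=
        hcard ▸ Finset.card_lt_card hsubsub
      obtain ⟨r', R', v', hR'card, hR'supp, hv'mono, hv'sign, hprod', ⟨i0, hi0⟩⟩ :=
        IH _ hcardlt c' rfl j1 (by rw [hc'at j1 le_rfl]; linarith) hc'0
      have hR'le : ∀ j ∈ R', j ≤ j1 := by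
        intro j hj
        by_contra h
        exact (hR'supp j hj) (hc'0 j (not_le.mp h))
      have hv'le : ∀ i, v' i ≤ j1 := by
        intro i
        by_contra h
        have hne : c' (v' i) ≠ 0 := by
          rcases Nat.mod_two_eq_zero_or_one (r' - i.1) with hp | hp
          · exact ne_of_gt ((hv'sign i).1 hp)
          · exact ne_of_lt ((hv'sign i).2 hp)
        exact hne (hc'0 _ (not_le.mp h))
      have hjmidR' : jmid ∉ R' := fun h => absurd (hR'le jmid h) (not_le.mpr hjmid1)
      refine ⟨r' + 1, insert jmid R', Fin.snoc v' jtop, ?_, ?_, ?_, ?_, ?_, ?_⟩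
      · rw [Finset.card_insert_of_notMem hjmidR', hR'card]
      · intro j hj
        rcases Finset.mem_insert.mp hj with rfl | hj
        · exact hjmidne
        · intro h
          exact hR'supp j hj (by rw [hc'at j (hR'le j hj), h, neg_zero])
      · exact strictMono_snoc _ _ hv'mono (fun i => lt_of_le_of_lt (hv'le i) hj1lt)
      · intro i
        rcases Fin.eq_castSucc_or_eq_last i with ⟨i', rfl⟩ | rfl
        · rw [Fin.snoc_castSucc]
          simp only [Fin.coe_castSucc]
          have hcv : c (v' i') = - c' (v' i') := by rw [hc'at _ (hv'le i')]; ring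
          have hi'le : i'.1 ≤ r' := Nat.lt_succ_iff.mp i'.isLt
          constructor
          · intro hp
            have : (r' - i'.1) % 2 = 1 := by omega
            rw [hcv]
            have := (hv'sign i').2 this
            linarith
          · intro hp
            have : (r' - i'.1) % 2 = 0 := by omega
            rw [hcv]
            have := (hv'sign i').1 this
            linarith
        · rw [Fin.snoc_last]
          simp only [Fin.val_last]
          constructor
          · intro _; simpa using hjpos
          · intro h; omega
      · intro i
        rw [Finset.prod_insert hjmidR']
        by_cases hile : i ≤ j1
        · have h1 : c i = - c' i := by rw [hc'at i hile]; ring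
          have h2 : t i - t jmid < 0 := by
            have := ht (lt_of_le_of_lt hile hjmid1)
            linarith
          have hthis := hprod' i
          have key : c i * ((t i - t jmid) * ∏ x ∈ R', (t i - t x))
              = (c' i * ∏ x ∈ R', (t i - t x)) * (t jmid - t i) := by rw [h1]; ring
          rw [key]
          exact mul_nonneg hthis (by linarith)
        · push_neg at hile
          by_cases hci : c i = 0
          · simp [hci]
          · have h3 : jmid ≤ i := hjmidle i hci hile
            have h4 : 0 ≤ t i - t jmid := by
              rcases eq_or_lt_of_le h3 with rfl | h
              · simp
              · have := ht h; linarith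
            have h5 : 0 ≤ ∏ j ∈ R', (t i - t j) := by
              apply Finset.prod_nonneg
              intro j hj
              have := ht (lt_of_le_of_lt (hR'le j hj) hile)
              linarith
            have h6 : 0 ≤ c i := hposabove i hile
            positivity
      · refine ⟨i0, ?_⟩
        have hi0ne : c' i0 ≠ 0 := by
          intro h
          rw [h] at hi0
          simp at hi0
        have hi0le : i0 ≤ j1 := by
          by_contra h
          exact hi0ne (hc'0 i0 (not_le.mp h))
        rw [Finset.prod_insert hjmidR']
        have h1 : c i0 = - c' i0 := by rw [hc'at i0 hi0le]; ring
        have h2 : t i0 - t jmid < 0 := by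
          have := ht (lt_of_le_of_lt hi0le hjmid1)
          linarith
        have key : c i0 * ((t i0 - t jmid) * ∏ x ∈ R', (t i0 - t x))
            = (c' i0 * ∏ x ∈ R', (t i0 - t x)) * (t jmid - t i0) := by rw [h1]; ring
        rw [key]
        exact mul_pos hi0 (by linarith)
    · -- all entries nonnegative
      have hpos : ∀ i, 0 ≤ c i := by
        intro i
        by_contra h
        push_neg at h
        exact hA ⟨i, by simpa using h⟩
      refine ⟨0, ∅, fun _ => jtop, by simp, by simp, (by intro a b hb; have ha1 := a.isLt; have hb1 := b.isLt; rw [Fin.lt_iff_val_lt_val] at hb; omega), ?_, ?_, ⟨jtop, by simpa using hjpos⟩⟩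
      · intro i
        constructor
        · intro _; simpa using hjpos
        · intro h; omega
      · intro i
        simpa using hpos i


def AltN {n : ℕ} (c : Fin n → ℝ) (k : ℕ) : Prop :=
  ∃ v : Fin k → Fin n, StrictMono v ∧
    ∀ i : Fin k, (i.1 % 2 = 0 → c (v i) < 0) ∧ (i.1 % 2 = 1 → 0 < c (v i))

lemma altP_neg {c : Fin n → ℝ} {k : ℕ} (h : AltP (fun i => -c i) k) : AltN c k := by
  obtain ⟨v, hv, hs⟩ := h
  exact ⟨v, hv, fun i => ⟨fun h2 => by have := (hs i).1 h2; simp at this; linarith,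
    fun h2 => by have := (hs i).2 h2; simp at this; linarith⟩⟩

lemma altN_neg {c : Fin n → ℝ} {k : ℕ} (h : AltN (fun i => -c i) k) : AltP c k := by
  obtain ⟨v, hv, hs⟩ := h
  exact ⟨v, hv, fun i => ⟨fun h2 => by have := (hs i).1 h2; simp at this; linarith,
    fun h2 => by have := (hs i).2 h2; simp at this; linarith⟩⟩

lemma sum_mul_eval (c : Fin n → ℝ) (x : Fin n → ℝ) (P : Polynomial ℝ) :
    ∑ i, c i * P.eval (x i)
      = ∑ k ∈ Finset.range (P.natDegree + 1), P.coeff k * ∑ i, c i * x i ^ k := by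
  calc ∑ i, c i * P.eval (x i)
      = ∑ i, ∑ k ∈ Finset.range (P.natDegree+1), c i * (P.coeff k * x i ^ k) := by
        apply Finset.sum_congr rfl; intro i _
        rw [Polynomial.eval_eq_sum_range, Finset.mul_sum]
    _ = ∑ k ∈ Finset.range (P.natDegree+1), ∑ i, c i * (P.coeff k * x i ^ k) :=
        Finset.sum_comm
    _ = _ := by
        apply Finset.sum_congr rfl; intro k _
        rw [Finset.mul_sum]
        apply Finset.sum_congr rfl; intro i _; ring

lemma rootProd_monic (t : Fin n → ℝ) (R : Finset (Fin n)) :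
    (∏ j ∈ R, (Polynomial.X - Polynomial.C (t j))).Monic :=
  monic_prod_of_monic _ _ (fun j _ => monic_X_sub_C _)

lemma rootProd_natDegree (t : Fin n → ℝ) (R : Finset (Fin n)) :
    (∏ j ∈ R, (Polynomial.X - Polynomial.C (t j))).natDegree = R.card := by
  rw [Polynomial.natDegree_prod _ _ (fun j _ => X_sub_C_ne_zero _)]
  simp [Polynomial.natDegree_X_sub_C]

lemma rootProd_eval (t : Fin n → ℝ) (R : Finset (Fin n)) (x : ℝ) :
    (∏ j ∈ R, (Polynomial.X - Polynomial.C (t j))).eval x = ∏ j ∈ R, (x - t j) := by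
  rw [Polynomial.eval_prod]
  simp

/-- If `c` is balanced to degree `m` and the products from `master` are
nonnegative with a positive one, the root set must have more than `m` elements. -/
lemma card_gt_of_balanced {t : Fin n → ℝ} {m : ℕ} {c : Fin n → ℝ}
    (hb : ∀ k ≤ m, ∑ i, c i * t i ^ k = 0) {R : Finset (Fin n)}
    (hprod : ∀ i, 0 ≤ c i * ∏ j ∈ R, (t i - t j))
    (hex : ∃ i, 0 < c i * ∏ j ∈ R, (t i - t j)) : m + 1 ≤ R.card := by
  by_contra h
  push_neg at h
  have hdeg : (∏ j ∈ R, (Polynomial.X - Polynomial.C (t j))).natDegree ≤ m := by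
    rw [rootProd_natDegree]; omega
  have hsum : ∑ i, c i * (∏ j ∈ R, (Polynomial.X - Polynomial.C (t j))).eval (t i) = 0 := by
    rw [sum_mul_eval]
    apply Finset.sum_eq_zero
    intro k hk
    rw [hb k (by simp at hk; omega), mul_zero]
  have hpos : 0 < ∑ i, c i * (∏ j ∈ R, (Polynomial.X - Polynomial.C (t j))).eval (t i) := by
    obtain ⟨i0, hi0⟩ := hex
    apply Finset.sum_pos' <;> simp only [rootProd_eval]
    · exact fun i _ => hprod i
    · exact ⟨i0, Finset.mem_univ _, hi0⟩
  linarith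

/-- Extract `AltP ∨ AltN` of any length `k ≤ r+1` from the master alternating sequence. -/
lemma altP_or_altN_of_pattern {c : Fin n → ℝ} {r k : ℕ} (hk : k ≤ r + 1)
    (v : Fin (r+1) → Fin n) (hmono : StrictMono v)
    (hsign : ∀ i : Fin (r+1), ((r - i.1) % 2 = 0 → 0 < c (v i)) ∧ ((r - i.1) % 2 = 1 → c (v i) < 0)) :
    AltP c k ∨ AltN c k := by
  rcases Nat.mod_two_eq_zero_or_one r with hr | hr
  · left
    refine ⟨v ∘ Fin.castLE hk, hmono.comp (Fin.strictMono_castLE hk), fun i => ?_⟩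
    have h1 : (Fin.castLE hk i).1 = i.1 := rfl
    have h2 : i.1 ≤ r := by have := i.isLt; omega
    constructor
    · intro hp
      exact (hsign _).1 (by rw [h1]; omega)
    · intro hp
      exact (hsign _).2 (by rw [h1]; omega)
  · right
    refine ⟨v ∘ Fin.castLE hk, hmono.comp (Fin.strictMono_castLE hk), fun i => ?_⟩
    have h1 : (Fin.castLE hk i).1 = i.1 := rfl
    have h2 : i.1 ≤ r := by have := i.isLt; omega
    constructor
    · intro hp
      exact (hsign _).2 (by rw [h1]; omega)
    · intro hp
      exact (hsign _).1 (by rw [h1]; omega)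

/-- L-A: a nonzero balanced vector has a long alternating sign sequence. -/
theorem altP_or_altN_of_balanced {t : Fin n → ℝ} (ht : StrictMono t) {m : ℕ} {c : Fin n → ℝ}
    (hc : ∃ i, c i ≠ 0) (hb : ∀ k ≤ m, ∑ i, c i * t i ^ k = 0) :
    AltP c (m+2) ∨ AltN c (m+2) := by
  obtain ⟨i0, hi0⟩ := hc
  have hne : (Finset.univ.filter (fun i => c i ≠ 0)).Nonempty := ⟨i0, by simp [hi0]⟩
  set jtop := (Finset.univ.filter (fun i => c i ≠ 0)).max' hne with hjdef
  have hjmem : c jtop ≠ 0 := by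
    have := Finset.max'_mem _ hne
    simpa [hjdef] using this
  have hjzero : ∀ i, jtop < i → c i = 0 := by
    intro i hi
    by_contra h
    exact absurd (lt_of_lt_of_le hi (Finset.le_max' _ i (by simp [h]))) (lt_irrefl _)
  rcases lt_or_gt_of_ne hjmem with hneg | hpos
  · -- apply master to -c
    obtain ⟨r, R, v, hRcard, _, hvmono, hvsign, hprod, hex⟩ :=
      master t ht _ (fun i => -c i) rfl jtop (by simp only [neg_pos]; exact hneg)
        (fun i hi => by simp only [neg_eq_zero]; exact hjzero i hi)
    have hb' : ∀ k ≤ m, ∑ i, (-c i) * t i ^ k = 0 := by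
      intro k hk
      have := hb k hk
      rw [← neg_eq_zero] at this
      rw [← this, ← Finset.sum_neg_distrib]
      apply Finset.sum_congr rfl
      intro i _; ring
    have hr := card_gt_of_balanced hb' hprod hex
    rcases altP_or_altN_of_pattern (c := fun i => -c i) (by omega : m + 2 ≤ r + 1) v hvmono hvsign with h | h
    · right; exact altP_neg h
    · left; exact altN_neg h
  · obtain ⟨r, R, v, hRcard, _, hvmono, hvsign, hprod, hex⟩ :=
      master t ht _ c rfl jtop hpos hjzero
    have hr := card_gt_of_balanced hb hprod hex
    exact altP_or_altN_of_pattern (by omega : m + 2 ≤ r + 1) v hvmono hvsign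

/-- L-B: sign of the `(d+1)`-st moment of a balanced vector with no long alternation
is the sign of its top entry (positive case). -/
theorem top_pos_moment_pos {t : Fin n → ℝ} (ht : StrictMono t) {d : ℕ} {c : Fin n → ℝ}
    (hb : ∀ k ≤ d, ∑ i, c i * t i ^ k = 0)
    (jtop : Fin n) (hjpos : 0 < c jtop) (hjzero : ∀ i, jtop < i → c i = 0)
    (hnoP : ¬ AltP c (d+3)) (hnoN : ¬ AltN c (d+3)) :
    0 < ∑ i, c i * t i ^ (d+1) := by
  obtain ⟨r, R, v, hRcard, _, hvmono, hvsign, hprod, hex⟩ :=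
    master t ht _ c rfl jtop hjpos hjzero
  have hr1 : d + 1 ≤ r := hRcard ▸ card_gt_of_balanced hb hprod hex
  have hr2 : r ≤ d + 1 := by
    by_contra h
    push_neg at h
    rcases altP_or_altN_of_pattern (by omega : d + 3 ≤ r + 1) v hvmono hvsign with hB | hB
    · exact hnoP hB
    · exact hnoN hB
  have hr : R.card = d + 1 := by omega
  set P := ∏ j ∈ R, (Polynomial.X - Polynomial.C (t j)) with hPdef
  have hPdeg : P.natDegree = d + 1 := by rw [hPdef, rootProd_natDegree, hr]
  have key : ∑ i, c i * P.eval (t i) = ∑ i, c i * t i ^ (d+1) := by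
    rw [sum_mul_eval, hPdeg]
    rw [Finset.sum_range_succ]
    have hlead : P.coeff (d+1) = 1 := by
      have := (rootProd_monic t R).coeff_natDegree
      rwa [hPdeg] at this
    rw [hlead, one_mul]
    have : ∑ k ∈ Finset.range (d+1), P.coeff k * ∑ i, c i * t i ^ k = 0 := by
      apply Finset.sum_eq_zero
      intro k hk
      rw [hb k (by simp at hk; omega), mul_zero]
    rw [this, zero_add]
  rw [← key]
  obtain ⟨i0, hi0⟩ := hex
  apply Finset.sum_pos' <;> simp only [hPdef, rootProd_eval]
  · exact fun i _ => hprod i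
  · exact ⟨i0, Finset.mem_univ _, hi0⟩

/-- There is a nonzero vector supported on the `m+2` given points that is balanced
to degree `m`. -/
lemma exists_balanced_on {t : Fin n → ℝ} {m : ℕ} (u : Fin (m+2) → Fin n)
    (hu : Function.Injective u) :
    ∃ c : Fin n → ℝ, (∃ i, c i ≠ 0) ∧ (∀ i, c i ≠ 0 → ∃ j, u j = i) ∧
      (∀ k ≤ m, ∑ i, c i * t i ^ k = 0) := by
  set w : Fin (m+2) → (Fin (m+1) → ℝ) := fun j k => t (u j) ^ (k : ℕ) with hwdef
  have hni : ¬ LinearIndependent ℝ w := by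
    intro h
    have := h.fintype_card_le_finrank
    rw [Module.finrank_fintype_fun_eq_card] at this
    simp at this
  obtain ⟨g, hg0, j0, hj0⟩ := Fintype.not_linearIndependent_iff.mp hni
  refine ⟨fun i => ∑ j, if u j = i then g j else 0, ⟨u j0, ?_⟩, ?_, ?_⟩
  · show (∑ j : Fin (m+2), if u j = u j0 then g j else 0) ≠ 0
    have : ∑ j, (if u j = u j0 then g j else 0) = g j0 := by
      rw [Finset.sum_eq_single j0]
      · simp
      · intro b _ hb
        rw [if_neg (fun h => hb (hu h))]
      · intro h; exact absurd (Finset.mem_univ _) h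
    rw [this]
    exact hj0
  · intro i hi
    by_contra h
    push_neg at h
    apply hi
    apply Finset.sum_eq_zero
    intro j _
    rw [if_neg (h j)]
  · intro k hk
    have hswap : ∑ i, (∑ j, if u j = i then g j else 0) * t i ^ k
        = ∑ j, ∑ i, (if u j = i then g j else 0) * t i ^ k := by
      rw [Finset.sum_comm]
      apply Finset.sum_congr rfl
      intro j _
      rw [Finset.sum_mul]
    rw [hswap]
    have : ∀ j, ∑ i, (if u j = i then g j else 0) * t i ^ k = g j * t (u j) ^ k := by
      intro j
      rw [Finset.sum_eq_single (u j)]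
      · simp
      · intro b _ hb; rw [if_neg (Ne.symm hb), zero_mul]
      · intro h; exact absurd (Finset.mem_univ _) h
    rw [Finset.sum_congr rfl (fun j _ => this j)]
    have := congrFun hg0 ⟨k, by omega⟩
    simpa [hwdef] using this

/-- On `m+2` given points there is a balanced vector whose signs strictly alternate
along the points, positive at even positions. -/
theorem exists_alt_dep {t : Fin n → ℝ} (ht : StrictMono t) {m : ℕ} (u : Fin (m+2) → Fin n)
    (hu : StrictMono u) :
    ∃ c : Fin n → ℝ, (∀ k ≤ m, ∑ i, c i * t i ^ k = 0) ∧ (∀ i, c i ≠ 0 → ∃ j, u j = i) ∧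
      (∀ j : Fin (m+2), (j.1 % 2 = 0 → 0 < c (u j)) ∧ (j.1 % 2 = 1 → c (u j) < 0)) := by
  obtain ⟨c, hcne, hcsupp, hcb⟩ := exists_balanced_on (t := t) u hu.injective
  have halt := altP_or_altN_of_balanced ht hcne hcb
  have hvu : ∀ (v : Fin (m+2) → Fin n), StrictMono v → (∀ i, c (v i) ≠ 0) → v = u := by
    intro v hv hvne
    have hsub : Set.range v ⊆ Set.range u := by
      rintro x ⟨i, rfl⟩
      obtain ⟨j, hj⟩ := hcsupp (v i) (hvne i)
      exact ⟨j, hj⟩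
    have h1 : (Finset.univ.image v) ⊆ (Finset.univ.image u) := by
      intro x hx
      simp only [Finset.mem_image] at hx ⊢
      obtain ⟨i, _, rfl⟩ := hx
      obtain ⟨j, hj⟩ := hsub ⟨i, rfl⟩
      exact ⟨j, Finset.mem_univ _, hj⟩
    have h2 : (Finset.univ.image u).card ≤ (Finset.univ.image v).card := by
      rw [Finset.card_image_of_injective _ hu.injective,
        Finset.card_image_of_injective _ hv.injective]
    have h3 := Finset.eq_of_subset_of_card_le h1 h2
    have hrange : Set.range v = Set.range u := by
      rw [← Set.image_univ, ← Set.image_univ, ← Finset.coe_univ, ← Finset.coe_image,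
        ← Finset.coe_image, h3]
    have inst : WellFoundedLT (Fin (m+2)) := inferInstance
    exact (@StrictMono.range_inj _ _ _ _ inst v u hv hu).mp hrange
  rcases halt with ⟨v, hv, hs⟩ | ⟨v, hv, hs⟩
  · have hvne : ∀ i, c (v i) ≠ 0 := by
      intro i
      rcases Nat.mod_two_eq_zero_or_one i.1 with h | h
      · exact ne_of_gt ((hs i).1 h)
      · exact ne_of_lt ((hs i).2 h)
    have := hvu v hv hvne
    subst this
    exact ⟨c, hcb, hcsupp, hs⟩
  · have hvne : ∀ i, c (v i) ≠ 0 := by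
      intro i
      rcases Nat.mod_two_eq_zero_or_one i.1 with h | h
      · exact ne_of_lt ((hs i).1 h)
      · exact ne_of_gt ((hs i).2 h)
    have := hvu v hv hvne
    subst this
    refine ⟨fun i => -c i, ?_, ?_, ?_⟩
    · intro k hk
      have := hcb k hk
      rw [← neg_eq_zero] at this
      rw [← this, ← Finset.sum_neg_distrib]
      exact Finset.sum_congr rfl (fun i _ => by ring)
    · intro i hi
      exact hcsupp i (by simpa using hi)
    · intro j
      refine ⟨fun h => by simpa using (hs j).1 h, fun h => by simpa using (hs j).2 h⟩







variable {t : Fin n → ℝ} {σ τ : Finset (Fin n)}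

lemma overlap_symm {d : ℕ} (h : Overlap d t σ τ) : Overlap d t τ σ := by
  intro hsub
  apply h
  rw [Finset.inter_comm]
  intro x hx
  exact hsub ⟨hx.2, hx.1⟩

lemma sum_smul_mc_apply {D : ℕ} (a : Fin n → ℝ) (k : Fin D) :
    (∑ i, a i • momentCurve D (t i)) k = ∑ i, a i * t i ^ (k.1 + 1) := by
  rw [Finset.sum_apply]
  apply Finset.sum_congr rfl
  intro i _
  simp [momentCurve]

lemma reps_balanced {D : ℕ} {a b : Fin n → ℝ} (ha1 : ∑ i, a i = 1) (hb1 : ∑ i, b i = 1)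
    (heq : ∑ i, a i • momentCurve D (t i) = ∑ i, b i • momentCurve D (t i)) :
    ∀ k ≤ D, ∑ i, (a i - b i) * t i ^ k = 0 := by
  intro k hk
  rcases Nat.eq_zero_or_pos k with rfl | hkpos
  · simp only [pow_zero, mul_one, Finset.sum_sub_distrib, ha1, hb1, sub_self]
  · obtain ⟨k', rfl⟩ := Nat.exists_eq_add_of_lt hkpos  -- k = 0 + k' + 1
    have hk' : k' < D := by omega
    have := congrFun heq ⟨k', hk'⟩
    rw [sum_smul_mc_apply, sum_smul_mc_apply] at this
    simp only [Finset.sum_sub_distrib, sub_mul]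
    simp only [Finset.sum_sub_distrib] at *
    simp only [zero_add]
    rw [this]
    ring

lemma balanced_reps {D : ℕ} {a b : Fin n → ℝ}
    (hbal : ∀ k ≤ D, ∑ i, (a i - b i) * t i ^ k = 0) :
    ∑ i, a i • momentCurve D (t i) = ∑ i, b i • momentCurve D (t i) := by
  funext k
  rw [sum_smul_mc_apply, sum_smul_mc_apply]
  have := hbal (k.1 + 1) (by omega)
  simp only [sub_mul, Finset.sum_sub_distrib] at this
  linarith

lemma altP_to_altSeq {c : Fin n → ℝ} {k : ℕ} (hpos : ∀ i, 0 < c i → i ∈ σ)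
    (hneg : ∀ i, c i < 0 → i ∈ τ) (h : AltP c k) : AltSeq σ τ k := by
  obtain ⟨v, hv, hs⟩ := h
  exact ⟨v, hv, fun i => ⟨fun hp => hpos _ ((hs i).1 hp), fun hp => hneg _ ((hs i).2 hp)⟩⟩

lemma altN_to_altSeq {c : Fin n → ℝ} {k : ℕ} (hpos : ∀ i, 0 < c i → i ∈ σ)
    (hneg : ∀ i, c i < 0 → i ∈ τ) (h : AltN c k) : AltSeq τ σ k := by
  obtain ⟨v, hv, hs⟩ := h
  exact ⟨v, hv, fun i => ⟨fun hp => hneg _ ((hs i).1 hp), fun hp => hpos _ ((hs i).2 hp)⟩⟩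

lemma card_le_of_strictMono_mem {s : Finset (Fin n)} {k : ℕ} (v : Fin k → Fin n)
    (hv : StrictMono v) (hmem : ∀ i, v i ∈ s) : k ≤ s.card := by
  have h1 : (Finset.univ.image v) ⊆ s := by
    intro x hx
    simp only [Finset.mem_image] at hx
    obtain ⟨i, _, rfl⟩ := hx
    exact hmem i
  calc k = (Finset.univ.image v).card := by
        rw [Finset.card_image_of_injective _ hv.injective, Finset.card_univ, Fintype.card_fin]
    _ ≤ s.card := Finset.card_le_card h1

/-- Claim A : no (d+2)-interlacing implies no overlap (the hulls meet inside
the common face). -/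
theorem subset_of_not_interlacing {d : ℕ} (ht : StrictMono t)
    (h : ¬ Interlacing σ τ (d+2)) :
    mcConv d t σ ∩ mcConv d t τ ⊆ mcConv d t (σ ∩ τ) := by
  rintro x ⟨hxσ, hxτ⟩
  obtain ⟨a, ha0, haσ, ha1, hax⟩ := mem_mcConv.mp hxσ
  obtain ⟨b, hb0, hbτ, hb1, hbx⟩ := mem_mcConv.mp hxτ
  have hbal : ∀ k ≤ d, ∑ i, ((fun i => a i - b i) i) * t i ^ k = 0 :=
    reps_balanced ha1 hb1 (hax.trans hbx.symm)
  by_cases hc : ∃ i, a i - b i ≠ 0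
  · exfalso
    apply h
    have hpos : ∀ i, 0 < a i - b i → i ∈ σ := fun i hi =>
      haσ i (by have := hb0 i; intro h; rw [h] at hi; linarith)
    have hneg : ∀ i, a i - b i < 0 → i ∈ τ := fun i hi =>
      hbτ i (by have := ha0 i; intro h; rw [h] at hi; linarith)
    rcases altP_or_altN_of_balanced ht hc hbal with hA | hA
    · exact Or.inl (altP_to_altSeq hpos hneg hA)
    · exact Or.inr (altN_to_altSeq hpos hneg hA)
  · push_neg at hc
    have hab : a = b := funext fun i => by have := hc i; linarith
    rw [mem_mcConv]
    refine ⟨a, ha0, fun i hi => Finset.mem_inter.mpr ⟨haσ i hi, hbτ i (hab ▸ hi)⟩, ha1, hax⟩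

/-- From an aligned alternating vector, positive entries lie in σ and negative in τ. -/
lemma aligned_mem {c : Fin n → ℝ} {k : ℕ} {u : Fin k → Fin n}
    (hcsupp : ∀ i, c i ≠ 0 → ∃ j, u j = i)
    (hsign : ∀ j : Fin k, (j.1 % 2 = 0 → 0 < c (u j)) ∧ (j.1 % 2 = 1 → c (u j) < 0))
    (hmem : ∀ j : Fin k, (j.1 % 2 = 0 → u j ∈ σ) ∧ (j.1 % 2 = 1 → u j ∈ τ)) :
    (∀ i, 0 < c i → i ∈ σ) ∧ (∀ i, c i < 0 → i ∈ τ) := by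
  constructor
  · intro i hi
    obtain ⟨j, rfl⟩ := hcsupp i (ne_of_gt hi)
    rcases Nat.mod_two_eq_zero_or_one j.1 with h | h
    · exact (hmem j).1 h
    · exact absurd hi (by have := (hsign j).2 h; linarith)
  · intro i hi
    obtain ⟨j, rfl⟩ := hcsupp i (ne_of_lt hi)
    rcases Nat.mod_two_eq_zero_or_one j.1 with h | h
    · exact absurd hi (by have := (hsign j).1 h; linarith)
    · exact (hmem j).2 h

lemma normalize_aligned {c : Fin n → ℝ} (hsum0 : ∑ i, c i = 0) (hex : ∃ i0, 0 < c i0) :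
    ∃ (M : ℝ) (a b : Fin n → ℝ), 0 < M ∧ (∀ i, 0 ≤ a i) ∧ (∀ i, 0 ≤ b i) ∧
      (∀ i, a i ≠ 0 → 0 < c i) ∧ (∀ i, b i ≠ 0 → c i < 0) ∧
      (∑ i, a i = 1) ∧ (∑ i, b i = 1) ∧ (∀ i, a i - b i = c i / M) := by
  obtain ⟨i0, hi0⟩ := hex
  set M : ℝ := ∑ i, max (c i) 0 with hMdef
  have hM0 : 0 < M := by
    have h1 : max (c i0) 0 ≤ M := Finset.single_le_sum (f := fun i => max (c i) 0)
      (fun i _ => le_max_right _ _) (Finset.mem_univ i0)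
    have : 0 < max (c i0) 0 := lt_max_of_lt_left hi0
    linarith
  have hkey : ∀ i, max (-c i) 0 = max (c i) 0 - c i := by
    intro i
    rcases le_or_gt (c i) 0 with h | h
    · rw [max_eq_left (by linarith), max_eq_right h]; ring
    · rw [max_eq_right (by linarith), max_eq_left h.le]; ring
  have hMneg : ∑ i, max (-c i) 0 = M := by
    rw [Finset.sum_congr rfl (fun i _ => hkey i), Finset.sum_sub_distrib, hsum0, sub_zero]
  refine ⟨M, fun i => max (c i) 0 / M, fun i => max (-c i) 0 / M, hM0, ?_, ?_, ?_, ?_, ?_, ?_, ?_⟩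
  · intro i; positivity
  · intro i; positivity
  · intro i hi
    rcases lt_or_ge 0 (c i) with h | h
    · exact h
    · exact absurd (by rw [max_eq_right h]; simp : max (c i) 0 / M = 0) hi
  · intro i hi
    rcases lt_or_ge (c i) 0 with h | h
    · exact h
    · exact absurd (by rw [max_eq_right (by linarith : -c i ≤ 0)]; simp : max (-c i) 0 / M = 0) hi
  · rw [← Finset.sum_div, ← hMdef, div_self (ne_of_gt hM0)]
  · rw [← Finset.sum_div, hMneg, div_self (ne_of_gt hM0)]
  · intro i
    show max (c i) 0 / M - max (-c i) 0 / M = c i / M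
    rw [hkey i, ← sub_div]
    congr 1
    ring

/-- The two lifted points associated with an alternating (d+2)-sequence:
they have equal projections and their height difference has a definite sign
determined by the parity of `d+1`. -/
lemma lift_pair {d : ℕ} (ht : StrictMono t) (u : Fin (d+2) → Fin n) (hu : StrictMono u)
    (hmem : ∀ j : Fin (d+2), (j.1 % 2 = 0 → u j ∈ σ) ∧ (j.1 % 2 = 1 → u j ∈ τ)) :
    ∃ q q', q ∈ mcConv (d+1) t σ ∧ q' ∈ mcConv (d+1) t τ ∧
      projLast d q = projLast d q' ∧
      (((d+1) % 2 = 0 → q' (Fin.last d) < q (Fin.last d)) ∧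
       ((d+1) % 2 = 1 → q (Fin.last d) < q' (Fin.last d))) := by
  obtain ⟨c, hcb, hcsupp, hcsign⟩ := exists_alt_dep ht u hu
  have hsum0 : ∑ i, c i = 0 := by
    have := hcb 0 (Nat.zero_le _)
    simpa using this
  have hzeroeven : ((0 : Fin (d+2)).1 % 2 = 0) := by simp
  obtain ⟨M, a, b, hM0, ha0, hb0, hac, hbc, ha1, hb1, hab⟩ :=
    normalize_aligned hsum0 ⟨u 0, (hcsign 0).1 hzeroeven⟩
  obtain ⟨hposσ, hnegτ⟩ := aligned_mem hcsupp hcsign hmem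
  set q := ∑ i, a i • momentCurve (d+1) (t i) with hqdef
  set q' := ∑ i, b i • momentCurve (d+1) (t i) with hq'def
  have hq : q ∈ mcConv (d+1) t σ :=
    mem_mcConv.mpr ⟨a, ha0, fun i hi => hposσ i (hac i hi), ha1, rfl⟩
  have hq' : q' ∈ mcConv (d+1) t τ :=
    mem_mcConv.mpr ⟨b, hb0, fun i hi => hnegτ i (hbc i hi), hb1, rfl⟩
  have hdiff : ∀ k : ℕ, ∑ i, a i * t i ^ k - ∑ i, b i * t i ^ k = (∑ i, c i * t i ^ k) / M := by
    intro k
    rw [← Finset.sum_sub_distrib, Finset.sum_div]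
    apply Finset.sum_congr rfl
    intro i _
    rw [← sub_mul, hab i]
    ring
  have hproj : projLast d q = projLast d q' := by
    funext k
    show q k.castSucc = q' k.castSucc
    rw [hqdef, hq'def, sum_smul_mc_apply, sum_smul_mc_apply]
    simp only [Fin.coe_castSucc]
    have h1 : (k.1 + 1) ≤ d := by have := k.isLt; omega
    have := hdiff (k.1 + 1)
    rw [hcb _ h1] at this
    simp at this
    linarith
  -- the height difference
  have hlast : q (Fin.last d) - q' (Fin.last d) = (∑ i, c i * t i ^ (d+1)) / M := by
    rw [hqdef, hq'def, sum_smul_mc_apply, sum_smul_mc_apply]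
    have := hdiff ((Fin.last d).1 + 1)
    simpa [Fin.val_last] using this
  -- top index of the support of c
  set jtop := u ⟨d+1, by omega⟩ with hjdef
  have hjzero : ∀ i, jtop < i → c i = 0 := by
    intro i hi
    by_contra hne
    obtain ⟨j, rfl⟩ := hcsupp i hne
    have : u j ≤ jtop := hu.monotone (by
      show j ≤ ⟨d+1, by omega⟩
      rw [Fin.le_def]
      have := j.isLt
      simp
      omega)
    exact absurd (lt_of_lt_of_le hi this) (lt_irrefl _)
  have hcard : ∀ k, (∃ v : Fin k → Fin n, StrictMono v ∧ ∀ i, c (v i) ≠ 0) → k ≤ d + 2 := by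
    rintro k ⟨v, hv, hvne⟩
    have : ∀ i, v i ∈ Finset.univ.image u := by
      intro i
      obtain ⟨j, hj⟩ := hcsupp (v i) (hvne i)
      exact Finset.mem_image.mpr ⟨j, Finset.mem_univ _, hj⟩
    have := card_le_of_strictMono_mem v hv this
    rwa [Finset.card_image_of_injective _ hu.injective, Finset.card_univ, Fintype.card_fin] at this
  have hnoP : ¬ AltP c (d+3) := by
    rintro ⟨v, hv, hs⟩
    have : ∀ i, c (v i) ≠ 0 := fun i => by
      rcases Nat.mod_two_eq_zero_or_one i.1 with h | h
      · exact ne_of_gt ((hs i).1 h)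
      · exact ne_of_lt ((hs i).2 h)
    have := hcard (d+3) ⟨v, hv, this⟩
    omega
  have hnoN : ¬ AltN c (d+3) := by
    rintro ⟨v, hv, hs⟩
    have : ∀ i, c (v i) ≠ 0 := fun i => by
      rcases Nat.mod_two_eq_zero_or_one i.1 with h | h
      · exact ne_of_lt ((hs i).1 h)
      · exact ne_of_gt ((hs i).2 h)
    have := hcard (d+3) ⟨v, hv, this⟩
    omega
  refine ⟨q, q', hq, hq', hproj, ?_, ?_⟩
  · intro hpar
    have hjpos : 0 < c jtop := (hcsign ⟨d+1, by omega⟩).1 hpar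
    have := top_pos_moment_pos ht hcb jtop hjpos hjzero hnoP hnoN
    have hpos : 0 < (∑ i, c i * t i ^ (d+1)) / M := by positivity
    linarith [hlast]
  · intro hpar
    have hjneg : c jtop < 0 := (hcsign ⟨d+1, by omega⟩).2 hpar
    have hbneg : ∀ k ≤ d, ∑ i, (fun i => -c i) i * t i ^ k = 0 := by
      intro k hk
      have := hcb k hk
      rw [← neg_eq_zero] at this
      rw [← this, ← Finset.sum_neg_distrib]
      exact Finset.sum_congr rfl (fun i _ => by ring)
    have hnegP : ¬ AltP (fun i => -c i) (d+3) := fun h => hnoN (altP_neg h)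
    have hnegN : ¬ AltN (fun i => -c i) (d+3) := fun h => hnoP (altN_neg h)
    have := top_pos_moment_pos ht hbneg jtop (by simpa using hjneg)
      (fun i hi => by simp [hjzero i hi]) hnegP hnegN
    have hneg : (∑ i, c i * t i ^ (d+1)) < 0 := by
      have h2 : ∑ i, (fun i => -c i) i * t i ^ (d+1) = - ∑ i, c i * t i ^ (d+1) := by
        rw [← Finset.sum_neg_distrib]
        exact Finset.sum_congr rfl (fun i _ => by ring)
      rw [h2] at this
      linarith
    have : (∑ i, c i * t i ^ (d+1)) / M < 0 := div_neg_of_neg_of_pos hneg hM0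
    linarith [hlast]

lemma balNeg {m : ℕ} {e : Fin n → ℝ} (hb : ∀ k ≤ m, ∑ i, e i * t i ^ k = 0) :
    ∀ k ≤ m, ∑ i, (fun i => -e i) i * t i ^ k = 0 := by
  intro k hk
  have := hb k hk
  rw [← neg_eq_zero] at this
  rw [← this, ← Finset.sum_neg_distrib]
  exact Finset.sum_congr rfl (fun i _ => by ring)

lemma sum_neg_moment {e : Fin n → ℝ} {k : ℕ} :
    ∑ i, (fun i => -e i) i * t i ^ k = - ∑ i, e i * t i ^ k := by
  rw [← Finset.sum_neg_distrib]
  exact Finset.sum_congr rfl (fun i _ => by ring)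

lemma moment_ne_zero {d : ℕ} (ht : StrictMono t) {e : Fin n → ℝ}
    (hb : ∀ k ≤ d, ∑ i, e i * t i ^ k = 0) (hne : ∃ i, e i ≠ 0)
    (hnoP : ¬ AltP e (d+3)) (hnoN : ¬ AltN e (d+3)) :
    ∑ i, e i * t i ^ (d+1) ≠ 0 := by
  obtain ⟨i0, hi0⟩ := hne
  have hnonempty : (Finset.univ.filter (fun i => e i ≠ 0)).Nonempty := ⟨i0, by simp [hi0]⟩
  set jtop := (Finset.univ.filter (fun i => e i ≠ 0)).max' hnonempty with hjdef
  have hjne : e jtop ≠ 0 := by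
    have := Finset.max'_mem _ hnonempty
    simpa [hjdef] using this
  have hjzero : ∀ i, jtop < i → e i = 0 := by
    intro i hi
    by_contra h
    exact absurd (lt_of_lt_of_le hi (Finset.le_max' _ i (by simp [h]))) (lt_irrefl _)
  rcases lt_or_gt_of_ne hjne with hneg | hpos
  · have := top_pos_moment_pos ht (balNeg hb) jtop (by simpa using hneg)
      (fun i hi => by simp [hjzero i hi]) (fun h => hnoN (altP_neg h)) (fun h => hnoP (altN_neg h))
    rw [sum_neg_moment] at this
    linarith
  · have := top_pos_moment_pos ht hb jtop hpos hjzero hnoP hnoN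
    linarith

/-- Extract a balanced vector with positive `(d+1)`-moment from a violated height
inequality. -/
lemma exists_c_of_not_heightLE {d : ℕ} (hn : ¬ HeightLE d t σ τ) :
    ∃ c : Fin n → ℝ, (∀ k ≤ d, ∑ i, c i * t i ^ k = 0) ∧
      (∀ i, 0 < c i → i ∈ σ) ∧ (∀ i, c i < 0 → i ∈ τ) ∧
      0 < ∑ i, c i * t i ^ (d+1) := by
  rw [HeightLE] at hn
  push_neg at hn
  obtain ⟨q, hq, q', hq', hproj, hlt⟩ := hn
  obtain ⟨a, ha0, haσ, ha1, hax⟩ := mem_mcConv.mp hq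
  obtain ⟨b, hb0, hbτ, hb1, hbx⟩ := mem_mcConv.mp hq'
  refine ⟨fun i => a i - b i, ?_, ?_, ?_, ?_⟩
  · intro k hk
    rcases Nat.eq_zero_or_pos k with rfl | hkpos
    · simp only [pow_zero, mul_one, Finset.sum_sub_distrib, ha1, hb1, sub_self]
    · obtain ⟨k', rfl⟩ := Nat.exists_eq_add_of_lt hkpos
      have hk' : k' < d := by omega
      have := congrFun hproj ⟨k', hk'⟩
      simp only [projLast] at this
      rw [← hax, ← hbx, sum_smul_mc_apply, sum_smul_mc_apply] at this
      simp only [Fin.coe_castSucc] at this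
      simp only [sub_mul, Finset.sum_sub_distrib, zero_add]
      rw [this]
      ring
  · intro i hi
    have hi' : 0 < a i - b i := hi
    apply haσ
    have := hb0 i
    intro h; rw [h] at hi'; linarith
  · intro i hi
    have hi' : a i - b i < 0 := hi
    apply hbτ
    have := ha0 i
    intro h; rw [h] at hi'; linarith
  · have hqlast : q (Fin.last d) = ∑ i, a i * t i ^ (d+1) := by
      rw [← hax, sum_smul_mc_apply]
      simp [Fin.val_last]
    have hq'last : q' (Fin.last d) = ∑ i, b i * t i ^ (d+1) := by
      rw [← hbx, sum_smul_mc_apply]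
      simp [Fin.val_last]
    have hdiff : ∑ i, (a i - b i) * t i ^ (d+1)
        = q (Fin.last d) - q' (Fin.last d) := by
      rw [hqlast, hq'last, ← Finset.sum_sub_distrib]
      exact Finset.sum_congr rfl (fun i _ => by ring)
    rw [hdiff]
    linarith

/-- Interlacing at level `d+3` makes both height comparisons fail. -/
theorem not_heightLE_of_altSeq {d : ℕ} (ht : StrictMono t) (h : AltSeq σ τ (d+3)) :
    ¬ HeightLE d t σ τ ∧ ¬ HeightLE d t τ σ := by
  obtain ⟨v, hv, hvmem⟩ := h
  -- first window : positions 0..d+1, pattern (σ, τ)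
  set u1 : Fin (d+2) → Fin n := fun j => v (Fin.castLE (by omega) j) with hu1
  have hu1mono : StrictMono u1 := hv.comp (Fin.strictMono_castLE _)
  have hu1mem : ∀ j : Fin (d+2), (j.1 % 2 = 0 → u1 j ∈ σ) ∧ (j.1 % 2 = 1 → u1 j ∈ τ) :=
    fun j => hvmem (Fin.castLE (by omega) j)
  -- second window : positions 1..d+2, pattern (τ, σ)
  set u2 : Fin (d+2) → Fin n := fun j => v ⟨j.1 + 1, by omega⟩ with hu2
  have hu2mono : StrictMono u2 := by
    intro x y hxy
    apply hv
    rw [Fin.lt_def] at hxy ⊢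
    simpa using hxy
  have hu2mem : ∀ j : Fin (d+2), (j.1 % 2 = 0 → u2 j ∈ τ) ∧ (j.1 % 2 = 1 → u2 j ∈ σ) := by
    intro j
    constructor
    · intro hj
      exact (hvmem ⟨j.1 + 1, by omega⟩).2 (by simp; omega)
    · intro hj
      exact (hvmem ⟨j.1 + 1, by omega⟩).1 (by simp; omega)
  obtain ⟨q1, q1', hq1, hq1', hproj1, hsA, hsB⟩ := lift_pair (σ := σ) (τ := τ) ht u1 hu1mono hu1mem
  obtain ⟨q2, q2', hq2, hq2', hproj2, hsA2, hsB2⟩ := lift_pair (σ := τ) (τ := σ) ht u2 hu2mono hu2mem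
  rcases Nat.mod_two_eq_zero_or_one (d+1) with hpar | hpar
  · constructor
    · intro hH
      exact absurd (hH q1 hq1 q1' hq1' hproj1) (not_le.mpr (hsA hpar))
    · intro hH
      exact absurd (hH q2 hq2 q2' hq2' hproj2) (not_le.mpr (hsA2 hpar))
  · constructor
    · intro hH
      exact absurd (hH q2' hq2' q2 hq2 hproj2.symm) (not_le.mpr (hsB2 hpar))
    · intro hH
      exact absurd (hH q1' hq1' q1 hq1 hproj1.symm) (not_le.mpr (hsB hpar))

theorem not_heightLE_of_interlacing {d : ℕ} (ht : StrictMono t)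
    (h : Interlacing σ τ (d+3)) : ¬ HeightLE d t σ τ ∧ ¬ HeightLE d t τ σ := by
  rcases h with h | h
  · exact not_heightLE_of_altSeq ht h
  · exact (not_heightLE_of_altSeq ht h).symm

lemma sum_div_moment {c : Fin n → ℝ} {M : ℝ} {k : ℕ} :
    ∑ i, (c i / M) * t i ^ k = (∑ i, c i * t i ^ k) / M := by
  rw [Finset.sum_div]
  exact Finset.sum_congr rfl (fun i _ => by ring)

/-- Claim B (oriented): a (d+2)-alternating sequence forces overlap. -/
theorem overlap_of_altSeq {d : ℕ} (ht : StrictMono t) (h : AltSeq σ τ (d+2))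
    (hσ : σ.card ≤ d+1) (hτ : τ.card ≤ d+1) : Overlap d t σ τ := by
  obtain ⟨u, hu, hmem⟩ := h
  obtain ⟨c, hcb, hcsupp, hcsign⟩ := exists_alt_dep ht u hu
  have hsum0 : ∑ i, c i = 0 := by simpa using hcb 0 (Nat.zero_le _)
  have hzeroeven : ((0 : Fin (d+2)).1 % 2 = 0) := by simp
  obtain ⟨M, a, b, hM0, ha0, hb0, hac, hbc, ha1, hb1, hab⟩ :=
    normalize_aligned hsum0 ⟨u 0, (hcsign 0).1 hzeroeven⟩
  obtain ⟨hposσ, hnegτ⟩ := aligned_mem hcsupp hcsign hmem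
  have hbal : ∀ k ≤ d, ∑ i, (a i - b i) * t i ^ k = 0 := by
    intro k hk
    have : ∑ i, (a i - b i) * t i ^ k = ∑ i, (c i / M) * t i ^ k :=
      Finset.sum_congr rfl (fun i _ => by rw [hab i])
    rw [this, sum_div_moment, hcb k hk, zero_div]
  set x := ∑ i, a i • momentCurve d (t i) with hxdef
  have hxσ : x ∈ mcConv d t σ :=
    mem_mcConv.mpr ⟨a, ha0, fun i hi => hposσ i (hac i hi), ha1, rfl⟩
  have hxb : x = ∑ i, b i • momentCurve d (t i) := balanced_reps hbal
  have hxτ : x ∈ mcConv d t τ :=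
    mem_mcConv.mpr ⟨b, hb0, fun i hi => hnegτ i (hbc i hi), hb1, hxb.symm⟩
  intro hsub
  obtain ⟨w, hw0, hwστ, hw1, hwx⟩ := mem_mcConv.mp (hsub ⟨hxσ, hxτ⟩)
  -- an even position whose point is not in τ
  have hjstar : ∃ j : Fin (d+2), j.1 % 2 = 0 ∧ u j ∉ τ := by
    by_contra hall
    push_neg at hall
    have : ∀ j : Fin (d+2), u j ∈ τ := by
      intro j
      rcases Nat.mod_two_eq_zero_or_one j.1 with hp | hp
      · exact hall j hp
      · exact (hmem j).2 hp
    have := card_le_of_strictMono_mem u hu this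
    omega
  obtain ⟨j0, hj0par, hj0τ⟩ := hjstar
  have hgbal := reps_balanced ha1 hw1 (hwx.symm : x = ∑ i, w i • momentCurve d (t i))
  have hbj0 : b (u j0) = 0 := by
    by_contra hb
    have := hbc _ hb
    have := (hcsign j0).1 hj0par
    linarith
  have hwj0 : w (u j0) = 0 := by
    by_contra hw
    exact hj0τ (Finset.mem_inter.mp (hwστ _ hw)).2
  have hgpos : 0 < a (u j0) - w (u j0) := by
    rw [hwj0, sub_zero]
    have := hab (u j0)
    rw [hbj0, sub_zero] at this
    rw [this]
    have := (hcsign j0).1 hj0par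
    positivity
  have hgne : ∃ i, a i - w i ≠ 0 := ⟨u j0, ne_of_gt hgpos⟩
  have hmemσ : ∀ i, a i - w i ≠ 0 → i ∈ σ := by
    intro i hi
    by_cases hai : a i = 0
    · have : w i ≠ 0 := by intro hwi; exact hi (by rw [hai, hwi, sub_zero])
      exact (Finset.mem_inter.mp (hwστ _ this)).1
    · exact hposσ i (hac i hai)
  rcases altP_or_altN_of_balanced ht hgne hgbal with ⟨vv, hvv, hss⟩ | ⟨vv, hvv, hss⟩ <;> {
    have hne : ∀ i, a (vv i) - w (vv i) ≠ 0 := by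
      intro i hzz
      rcases Nat.mod_two_eq_zero_or_one i.1 with hpp | hpp
      · have h := (hss i).1 hpp
        simp only at h
        linarith
      · have h := (hss i).2 hpp
        simp only at h
        linarith
    have := card_le_of_strictMono_mem vv hvv (fun i => hmemσ _ (hne i))
    omega }

theorem overlap_of_interlacing {d : ℕ} (ht : StrictMono t) (h : Interlacing σ τ (d+2))
    (hσ : σ.card ≤ d+1) (hτ : τ.card ≤ d+1) : Overlap d t σ τ := by
  rcases h with h | h
  · exact overlap_of_altSeq ht h hσ hτ
  · exact overlap_symm (overlap_of_altSeq ht h hτ hσ)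

/-- Totality of the height comparison in the absence of (d+3)-interlacing. -/
theorem heightLE_or {d : ℕ} (ht : StrictMono t) (hσ : σ.card ≤ d+1)
    (hno : ¬ Interlacing σ τ (d+3)) :
    HeightLE d t σ τ ∨ HeightLE d t τ σ := by
  by_contra hcon
  push_neg at hcon
  obtain ⟨h1, h2⟩ := hcon
  obtain ⟨c, hcb, hcσ, hcτ, hcD⟩ := exists_c_of_not_heightLE h1
  obtain ⟨c', hc'b, hc'τ, hc'σ, hc'D⟩ := exists_c_of_not_heightLE h2
  set D := ∑ i, c i * t i ^ (d+1) with hD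
  set D' := ∑ i, c' i * t i ^ (d+1) with hD'
  set e : Fin n → ℝ := fun i => D' * c i - D * c' i with he
  have hebal : ∀ k ≤ d, ∑ i, e i * t i ^ k = 0 := by
    intro k hk
    have : ∑ i, e i * t i ^ k
        = D' * ∑ i, c i * t i ^ k - D * ∑ i, c' i * t i ^ k := by
      rw [Finset.mul_sum, Finset.mul_sum, ← Finset.sum_sub_distrib]
      exact Finset.sum_congr rfl (fun i _ => by rw [he]; ring)
    rw [this, hcb k hk, hc'b k hk]
    ring
  have heD : ∑ i, e i * t i ^ (d+1) = 0 := by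
    have : ∑ i, e i * t i ^ (d+1)
        = D' * ∑ i, c i * t i ^ (d+1) - D * ∑ i, c' i * t i ^ (d+1) := by
      rw [Finset.mul_sum, Finset.mul_sum, ← Finset.sum_sub_distrib]
      exact Finset.sum_congr rfl (fun i _ => by rw [he]; ring)
    rw [this, ← hD, ← hD']
    ring
  have hepos : ∀ i, 0 < e i → i ∈ σ := by
    intro i hi
    rw [he] at hi
    simp only at hi
    rcases lt_or_ge 0 (c i) with h | h
    · exact hcσ i h
    · apply hc'σ i
      nlinarith
  have heneg : ∀ i, e i < 0 → i ∈ τ := by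
    intro i hi
    rw [he] at hi
    simp only at hi
    rcases lt_or_ge (c i) 0 with h | h
    · exact hcτ i h
    · apply hc'τ i
      nlinarith
  have hnoP : ¬ AltP e (d+3) := fun hA => hno (Or.inl (altP_to_altSeq hepos heneg hA))
  have hnoN : ¬ AltN e (d+3) := fun hA => hno (Or.inr (altN_to_altSeq hepos heneg hA))
  by_cases hene : ∃ i, e i ≠ 0
  · exact moment_ne_zero ht hebal hene hnoP hnoN heD
  · push_neg at hene
    -- e = 0 : c and c' are proportional, support of c lies in σ ∩ τ, in particular in σ
    have hmemσ : ∀ i, c i ≠ 0 → i ∈ σ := by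
      intro i hi
      rcases lt_or_gt_of_ne hi with h | h
      · -- c i < 0 : then c' i < 0, so i ∈ σ
        apply hc'σ i
        have := hene i
        rw [he] at this
        simp only at this
        nlinarith
      · exact hcσ i h
    have hcne : ∃ i, c i ≠ 0 := by
      by_contra hz
      push_neg at hz
      have : D = 0 := by
        rw [hD]
        apply Finset.sum_eq_zero
        intro i _
        rw [hz i, zero_mul]
      linarith
    rcases altP_or_altN_of_balanced ht hcne hcb with ⟨vv, hvv, hss⟩ | ⟨vv, hvv, hss⟩ <;> {
      have hne : ∀ i, c (vv i) ≠ 0 := by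
        intro i hzz
        rcases Nat.mod_two_eq_zero_or_one i.1 with hpp | hpp
        · have h := (hss i).1 hpp
          linarith
        · have h := (hss i).2 hpp
          linarith
      have := card_le_of_strictMono_mem vv hvv (fun i => hmemσ _ (hne i))
      omega }

/-- The two strict height relations cannot hold simultaneously. -/
theorem not_both_heightLE {d : ℕ} (ht : StrictMono t) (hσ : σ.card ≤ d+1)
    (hov : Overlap d t σ τ) (h1 : HeightLE d t σ τ) (h2 : HeightLE d t τ σ) : False := by
  obtain ⟨x, hx, hnx⟩ := Set.not_subset.mp hov
  obtain ⟨a, ha0, haσ, ha1, hax⟩ := mem_mcConv.mp hx.1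
  obtain ⟨b, hb0, hbτ, hb1, hbx⟩ := mem_mcConv.mp hx.2
  have hbal : ∀ k ≤ d, ∑ i, (a i - b i) * t i ^ k = 0 :=
    reps_balanced ha1 hb1 (hax.trans hbx.symm)
  have hcne : ∃ i, a i - b i ≠ 0 := by
    by_contra hz
    push_neg at hz
    apply hnx
    have hab : a = b := funext fun i => by have := hz i; linarith
    exact mem_mcConv.mpr ⟨a, ha0,
      fun i hi => Finset.mem_inter.mpr ⟨haσ i hi, hbτ i (hab ▸ hi)⟩, ha1, hax⟩
  set q := ∑ i, a i • momentCurve (d+1) (t i) with hqdef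
  set q' := ∑ i, b i • momentCurve (d+1) (t i) with hq'def
  have hq : q ∈ mcConv (d+1) t σ := mem_mcConv.mpr ⟨a, ha0, haσ, ha1, rfl⟩
  have hq' : q' ∈ mcConv (d+1) t τ := mem_mcConv.mpr ⟨b, hb0, hbτ, hb1, rfl⟩
  have hproj : projLast d q = projLast d q' := by
    funext k
    show q k.castSucc = q' k.castSucc
    rw [hqdef, hq'def, sum_smul_mc_apply, sum_smul_mc_apply]
    simp only [Fin.coe_castSucc]
    have h1k : (k.1 + 1) ≤ d := by have := k.isLt; omega
    have := hbal _ h1k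
    simp only [sub_mul, Finset.sum_sub_distrib] at this
    linarith
  have hle1 := h1 q hq q' hq' hproj
  have hle2 := h2 q' hq' q hq hproj.symm
  have hD0 : ∑ i, (a i - b i) * t i ^ (d+1) = 0 := by
    have hqlast : q (Fin.last d) = ∑ i, a i * t i ^ (d+1) := by
      rw [hqdef, sum_smul_mc_apply]; simp [Fin.val_last]
    have hq'last : q' (Fin.last d) = ∑ i, b i * t i ^ (d+1) := by
      rw [hq'def, sum_smul_mc_apply]; simp [Fin.val_last]
    have : ∑ i, (a i - b i) * t i ^ (d+1)
        = q (Fin.last d) - q' (Fin.last d) := by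
      rw [hqlast, hq'last, ← Finset.sum_sub_distrib]
      exact Finset.sum_congr rfl (fun i _ => by ring)
    rw [this]
    linarith
  by_cases hint : Interlacing σ τ (d+3)
  · exact (not_heightLE_of_interlacing ht hint).1 h1
  · have hpos : ∀ i, 0 < a i - b i → i ∈ σ := fun i hi =>
      haσ i (by have := hb0 i; intro h; rw [h] at hi; linarith)
    have hneg : ∀ i, a i - b i < 0 → i ∈ τ := fun i hi =>
      hbτ i (by have := ha0 i; intro h; rw [h] at hi; linarith)
    have hnoP : ¬ AltP (fun i => a i - b i) (d+3) :=
      fun hA => hint (Or.inl (altP_to_altSeq hpos hneg hA))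
    have hnoN : ¬ AltN (fun i => a i - b i) (d+3) :=
      fun hA => hint (Or.inr (altN_to_altSeq hpos hneg hA))
    exact moment_ne_zero ht hbal hcne hnoP hnoN hD0

lemma altSeq_mono {k k' : ℕ} (hk : k' ≤ k) (h : AltSeq σ τ k) : AltSeq σ τ k' := by
  obtain ⟨v, hv, hs⟩ := h
  exact ⟨v ∘ Fin.castLE hk, hv.comp (Fin.strictMono_castLE hk), fun i => hs (Fin.castLE hk i)⟩

lemma interlacing_mono {k k' : ℕ} (hk : k' ≤ k) (h : Interlacing σ τ k) :
    Interlacing σ τ k' := by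
  rcases h with h | h
  · exact Or.inl (altSeq_mono hk h)
  · exact Or.inr (altSeq_mono hk h)


end Aux

/-- **Corollary (four mutually exclusive cases).** For any pair of simplices `σ, τ ⊆ [n]`
on `γ_d`, exactly one of the following holds:
(A) `σ` and `τ` do not overlap in `ℝ^d` (equivalently, are not `(d+2)`-interlacing);
(B) `σ <_{d+1} τ`; (C) `τ <_{d+1} σ`;
(D) the liftings overlap in `ℝ^{d+1}` (equivalently, `σ, τ` are `(d+3)`-interlacing). -/
theorem four_exclusive_cases
    (d n : ℕ) (t : Fin n → ℝ) (ht : StrictMono t)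
    (σ τ : Finset (Fin n)) (hσ : σ.card ≤ d + 1) (hτ : τ.card ≤ d + 1) :
    (¬ Overlap d t σ τ ↔ ¬ Interlacing σ τ (d + 2)) ∧
    (Overlap (d + 1) t σ τ ↔ Interlacing σ τ (d + 3)) ∧
    (¬ Overlap d t σ τ ∨ HeightLT d t σ τ ∨ HeightLT d t τ σ ∨ Overlap (d + 1) t σ τ) ∧
    ¬ (¬ Overlap d t σ τ ∧ HeightLT d t σ τ) ∧
    ¬ (¬ Overlap d t σ τ ∧ HeightLT d t τ σ) ∧
    ¬ (¬ Overlap d t σ τ ∧ Overlap (d + 1) t σ τ) ∧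
    ¬ (HeightLT d t σ τ ∧ HeightLT d t τ σ) ∧
    ¬ (HeightLT d t σ τ ∧ Overlap (d + 1) t σ τ) ∧
    ¬ (HeightLT d t τ σ ∧ Overlap (d + 1) t σ τ) := by
  have iffA : ¬ Overlap d t σ τ ↔ ¬ Interlacing σ τ (d + 2) := by
    constructor
    · intro h hint
      exact h (overlap_of_interlacing ht hint hσ hτ)
    · intro h hov
      exact hov (subset_of_not_interlacing ht h)
  have iffD : Overlap (d + 1) t σ τ ↔ Interlacing σ τ (d + 3) := by
    constructor
    · intro h
      by_contra hint
      exact h (subset_of_not_interlacing (d := d+1) ht hint)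
    · intro h
      exact overlap_of_interlacing (d := d+1) ht h (by omega) (by omega)
  refine ⟨iffA, iffD, ?_, ?_, ?_, ?_, ?_, ?_, ?_⟩
  · by_cases hov : Overlap d t σ τ
    · by_cases hov2 : Overlap (d + 1) t σ τ
      · exact Or.inr (Or.inr (Or.inr hov2))
      · have hint : ¬ Interlacing σ τ (d+3) := fun h => hov2 (iffD.mpr h)
        rcases heightLE_or ht hσ hint with h | h
        · exact Or.inr (Or.inl ⟨hov, h⟩)
        · exact Or.inr (Or.inr (Or.inl ⟨overlap_symm hov, h⟩))
    · exact Or.inl hov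
  · rintro ⟨h, hB⟩; exact h hB.1
  · rintro ⟨h, hC⟩; exact h (overlap_symm hC.1)
  · rintro ⟨h, hD⟩
    exact h (overlap_of_interlacing ht (interlacing_mono (by omega) (iffD.mp hD)) hσ hτ)
  · rintro ⟨hB, hC⟩
    exact not_both_heightLE ht hσ hB.1 hB.2 hC.2
  · rintro ⟨hB, hD⟩
    exact (not_heightLE_of_interlacing ht (iffD.mp hD)).1 hB.2
  · rintro ⟨hC, hD⟩
    exact (not_heightLE_of_interlacing ht (iffD.mp hD)).2 hC.2
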